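/- Let G be a finite group with subgroups A and B of coprime indices such that G = AB and [A, B] solvable. Set N = B·R where R is the solvable radical of G. Then for any a ∈ A, the subgroups N⟨a⟩ ∩ A and B have coprime indices in the subgroup N⟨a⟩. -/

import Mathlib

open Pointwise commutatorElement


/-- The solvable radical: the join of all solvable normal subgroups. -/
def solvableRadical (G : Type*) [Group G] : Subgroup G :=
  ⨆ N : {N : Subgroup G // N.Normal ∧ IsSolvable N}, (N : Subgroup G)

lemma solvableRadical_normal (G : Type*) [Group G] : (solvableRadical G).Normal := by
  constructor
  intro n hn g
  refine Subgroup.iSup_induction (C := fun y => g * y * g⁻¹ ∈ solvableRadical G)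
    (fun N : {N : Subgroup G // N.Normal ∧ IsSolvable N} => (N : Subgroup G)) hn
    (fun i x hx => ?_) ?_ (fun x y hx hy => ?_)
  · exact Subgroup.mem_iSup_of_mem i (i.2.1.conj_mem x hx g)
  · simpa using one_mem (solvableRadical G)
  · show g * (x * y) * g⁻¹ ∈ solvableRadical G
    have h : g * (x * y) * g⁻¹ = (g * x * g⁻¹) * (g * y * g⁻¹) := by group
    rw [h]; exact mul_mem hx hy

/-- Second isomorphism, relindex form, in a finite group. -/
lemma relindex_sup_of_normal {G : Type*} [Group G] [Finite G] (N K : Subgroup G)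
    [N.Normal] : K.relIndex (N ⊔ K) = (N ⊓ K).relIndex N := by
  have h1 : (N ⊓ K).relIndex K * K.relIndex (N ⊔ K) = (N ⊓ K).relIndex (N ⊔ K) :=
    Subgroup.relIndex_mul_relIndex _ _ _ inf_le_right le_sup_right
  have h2 : (N ⊓ K).relIndex N * N.relIndex (N ⊔ K) = (N ⊓ K).relIndex (N ⊔ K) :=
    Subgroup.relIndex_mul_relIndex _ _ _ inf_le_left le_sup_left
  have h3 : N.relIndex (N ⊔ K) = (N ⊓ K).relIndex K := by
    rw [Subgroup.relIndex_sup_left, Subgroup.inf_relIndex_right]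
  rw [h3] at h2
  have hne : (N ⊓ K).relIndex K ≠ 0 := Subgroup.index_ne_zero_of_finite
  have := h1.trans h2.symm
  rw [mul_comm ((N ⊓ K).relIndex N)] at this
  exact Nat.eq_of_mul_eq_mul_left (Nat.pos_of_ne_zero hne) this

theorem stmt_8 {G : Type*} [Group G] [Finite G] (A B : Subgroup G)
    (hG : ∀ g : G, ∃ a ∈ A, ∃ b ∈ B, g = a * b)
    (hcop : Nat.Coprime A.index B.index)
    (hcomm : ⁅A, B⁆ ≤ solvableRadical G) :
    ∀ a ∈ A,
      Nat.Coprime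
        (B.relIndex (B ⊔ solvableRadical G ⊔ Subgroup.closure {a}))
        (((B ⊔ solvableRadical G ⊔ Subgroup.closure {a}) ⊓ A).relIndex
          (B ⊔ solvableRadical G ⊔ Subgroup.closure {a})) := by
  intro a ha
  haveI hRn : (solvableRadical G).Normal := solvableRadical_normal G
  set R := solvableRadical G with hR
  set N : Subgroup G := B ⊔ R with hN
  set M : Subgroup G := N ⊔ Subgroup.closure {a} with hM
  -- N is normal in G
  have hAconj : ∀ x ∈ A, ∀ n ∈ N, x * n * x⁻¹ ∈ N := by
    intro x hx n hn
    have hn' : n ∈ (B : Set G) * (R : Set G) := by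
      rw [← Subgroup.mul_normal B R]; exact hn
    obtain ⟨b, hb, r, hr, rfl⟩ := hn'
    have h1 : x * b * x⁻¹ ∈ N := by
      have hc : ⁅x, b⁆ ∈ R := hcomm (Subgroup.commutator_mem_commutator hx hb)
      have he : x * b * x⁻¹ = ⁅x, b⁆ * b := by group
      rw [he]
      exact mul_mem ((le_sup_right : R ≤ N) hc) ((le_sup_left : B ≤ N) hb)
    have h2 : x * r * x⁻¹ ∈ N := (le_sup_right : R ≤ N) (hRn.conj_mem r hr x)
    have he : x * (b * r) * x⁻¹ = (x * b * x⁻¹) * (x * r * x⁻¹) := by group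
    rw [he]; exact mul_mem h1 h2
  haveI hNn : N.Normal := by
    constructor
    intro n hn g
    obtain ⟨x, hx, y, hy, rfl⟩ := hG g
    have h1 : y * n * y⁻¹ ∈ N :=
      mul_mem (mul_mem ((le_sup_left : B ≤ N) hy) hn) (inv_mem ((le_sup_left : B ≤ N) hy))
    have : x * y * n * (x * y)⁻¹ = x * (y * n * y⁻¹) * x⁻¹ := by group
    rw [this]
    exact hAconj x hx _ h1
  -- a ∈ M ⊓ A, and M = N ⊔ (M ⊓ A)
  have haM : a ∈ M := (le_sup_right : Subgroup.closure {a} ≤ M) (Subgroup.subset_closure rfl)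
  have hMeq : M = N ⊔ (M ⊓ A) := by
    refine le_antisymm (sup_le le_sup_left ?_) (sup_le le_sup_left inf_le_left)
    refine le_trans ((Subgroup.closure_le _).mpr ?_) le_sup_right
    intro z hz
    rw [Set.mem_singleton_iff] at hz
    subst hz
    exact ⟨haM, ha⟩
  -- the A-side relindex divides A.index
  have hinfeq : N ⊓ (M ⊓ A) = N ⊓ A := by
    rw [← inf_assoc, inf_of_le_left (le_sup_left : N ≤ M)]
  have hAside : (M ⊓ A).relIndex M ∣ A.index := by
    have e1 : (M ⊓ A).relIndex M = (N ⊓ A).relIndex N := by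
      have h := relindex_sup_of_normal N (M ⊓ A)
      rw [← hMeq, hinfeq] at h
      exact h
    have e2 : A.relIndex (N ⊔ A) = (N ⊓ A).relIndex N := relindex_sup_of_normal N A
    rw [e1, ← e2]
    exact Subgroup.relIndex_dvd_index_of_le le_sup_right
  -- the B-side relindex divides B.index
  have hBside : B.relIndex M ∣ B.index :=
    Subgroup.relIndex_dvd_index_of_le (le_trans le_sup_left (le_sup_left : N ≤ M))
  exact (Nat.Coprime.coprime_dvd_left hBside hcop.symm).coprime_dvd_right hAside
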